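/- Fix an agent i, a price p > 0 per unit, and a real α > 0, and let π be a permutation of {1,…,n} drawn uniformly at random, independently of ω. Then E_{ω,π}[ min{ α, Σ_{j preceding i in π} y*_j(ω) } ] ≤ max{α, 1/2} · E_{ω,π}[ Σ_{j=1}^n y_j(ω,π) ]. -/
import Mathlib


open MeasureTheory

/-- Telescoping lemma: the total sequential allocation equals `min 1 (∑ a)`. -/
lemma seq_alloc_sum {n : ℕ} (a : Fin n → ℝ) (ha : ∀ j, 0 ≤ a j) (π : Equiv.Perm (Fin n)) :
    ∑ j, min (a j) (max 0 (1 - ∑ j' ∈ Finset.univ.filter (fun j' => π j' < π j), a j'))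
      = min 1 (∑ j, a j) := by
  classical
  set c : ℕ → ℝ := fun t => if h : t < n then a (π.symm ⟨t, h⟩) else 0 with hcdef
  have hc0 : ∀ t, 0 ≤ c t := by
    intro t; simp only [hcdef]
    split
    · exact ha _
    · exact le_refl 0
  have hG0 : ∀ t, 0 ≤ ∑ s ∈ Finset.range t, c s :=
    fun t => Finset.sum_nonneg fun s _ => hc0 s
  -- the prefix-sum identity: for any m : Fin n,
  have key : ∀ m : Fin n, (∑ j' ∈ Finset.univ.filter (fun j' => π j' < m), a j')
      = ∑ t ∈ Finset.range m.val, c t := by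
    intro m
    refine Finset.sum_nbij' (fun j' => (π j' : ℕ)) (fun t => π.symm ⟨t % n, Nat.mod_lt _ m.pos⟩)
      ?_ ?_ ?_ ?_ ?_
    · intro j' hj'
      simp only [Finset.mem_filter, Finset.mem_univ, true_and] at hj'
      simpa using hj'
    · intro t ht
      simp only [Finset.mem_range] at ht
      have htn : t < n := lt_of_lt_of_le ht (Nat.le_of_lt_succ (Nat.lt_succ_of_lt m.isLt))
      simp only [Finset.mem_filter, Finset.mem_univ, true_and, Equiv.apply_symm_apply]
      have : t % n = t := Nat.mod_eq_of_lt htn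
      simp [this, Fin.lt_def, ht]
    · intro j' hj'
      simp only [Finset.mem_filter, Finset.mem_univ, true_and] at hj'
      have : ((π j' : ℕ)) % n = (π j' : ℕ) := Nat.mod_eq_of_lt (π j').isLt
      simp [this]
    · intro t ht
      simp only [Finset.mem_range] at ht
      have htn : t < n := lt_of_lt_of_le ht (Nat.le_of_lt_succ (Nat.lt_succ_of_lt m.isLt))
      have : t % n = t := Nat.mod_eq_of_lt htn
      simp [this]
    · intro j' hj'
      simp only [hcdef]
      rw [dif_pos (π j').isLt]
      congr 1
      exact (Equiv.symm_apply_apply π j').symm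
  -- reindex the main sum by π.symm
  have reidx : ∑ j, min (a j) (max 0 (1 - ∑ j' ∈ Finset.univ.filter (fun j' => π j' < π j), a j'))
      = ∑ m : Fin n,
          min (a (π.symm m)) (max 0 (1 - ∑ j' ∈ Finset.univ.filter (fun j' => π j' < m), a j')) := by
    rw [← Equiv.sum_comp π
      (fun m => min (a (π.symm m)) (max 0 (1 - ∑ j' ∈ Finset.univ.filter (fun j' => π j' < m), a j')))]
    apply Finset.sum_congr rfl
    intro j _
    simp
  rw [reidx]
  have hsum_total : ∑ t ∈ Finset.range n, c t = ∑ j, a j := by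
    rw [← Fin.sum_univ_eq_sum_range]
    rw [← Equiv.sum_comp π.symm a]
    apply Finset.sum_congr rfl
    intro m _
    simp only [hcdef]
    rw [dif_pos m.isLt]
  have step : ∀ m : Fin n,
      min (a (π.symm m)) (max 0 (1 - ∑ j' ∈ Finset.univ.filter (fun j' => π j' < m), a j'))
        = min 1 (∑ t ∈ Finset.range (m.val + 1), c t) - min 1 (∑ t ∈ Finset.range m.val, c t) := by
    intro m
    rw [key m, Finset.sum_range_succ]
    have ham : a (π.symm m) = c m.val := by
      simp only [hcdef]; rw [dif_pos m.isLt]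
    rw [ham]
    set G := ∑ t ∈ Finset.range m.val, c t with hG
    have hG0' : 0 ≤ G := hG0 _
    have hc0' : 0 ≤ c m.val := hc0 _
    rcases le_or_gt 1 G with h | h
    · rw [max_eq_left (by linarith), min_eq_right hc0', min_eq_left h,
        min_eq_left (by linarith)]
      ring
    · rw [max_eq_right (by linarith), min_eq_right (le_of_lt h)]
      rcases le_or_gt (G + c m.val) 1 with h2 | h2
      · rw [min_eq_right h2, min_eq_left (by linarith : c m.val ≤ 1 - G)]
        ring
      · rw [min_eq_left (le_of_lt h2), min_eq_right (by linarith : 1 - G ≤ c m.val)]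
  calc ∑ m : Fin n,
      min (a (π.symm m)) (max 0 (1 - ∑ j' ∈ Finset.univ.filter (fun j' => π j' < m), a j'))
      = ∑ m : Fin n, (min 1 (∑ t ∈ Finset.range (m.val + 1), c t)
          - min 1 (∑ t ∈ Finset.range m.val, c t)) := Finset.sum_congr rfl fun m _ => step m
    _ = ∑ t ∈ Finset.range n, ((fun k => min 1 (∑ s ∈ Finset.range k, c s)) (t + 1)
          - (fun k => min 1 (∑ s ∈ Finset.range k, c s)) t) := by
        rw [← Fin.sum_univ_eq_sum_range]
    _ = min 1 (∑ t ∈ Finset.range n, c t) - min 1 (∑ t ∈ Finset.range 0, c t) :=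
        Finset.sum_range_sub (fun k => min 1 (∑ s ∈ Finset.range k, c s)) n
    _ = min 1 (∑ j, a j) := by
        rw [hsum_total]; simp

/-- Pairing lemma: averaged over permutations, the truncated predecessor sum is bounded. -/
lemma perm_pair_bound {n : ℕ} (a : Fin n → ℝ) (ha : ∀ j, 0 ≤ a j) (i : Fin n)
    (α : ℝ) (hα : 0 < α) :
    ∑ π : Equiv.Perm (Fin n),
        min α (∑ j ∈ Finset.univ.filter (fun j => π j < π i), a j)
      ≤ max α (1 / 2) * ∑ π : Equiv.Perm (Fin n), min 1 (∑ j, a j) := by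
  classical
  set T := ∑ j, a j with hT
  have hT0 : 0 ≤ T := Finset.sum_nonneg fun j _ => ha j
  set f : Equiv.Perm (Fin n) → ℝ :=
    fun π => min α (∑ j ∈ Finset.univ.filter (fun j => π j < π i), a j) with hf
  -- key pairwise bound
  have hrev : ∀ π : Equiv.Perm (Fin n), f (Fin.revPerm * π)
      = min α (∑ j ∈ Finset.univ.filter (fun j => π i < π j), a j) := by
    intro π
    simp only [hf, Equiv.Perm.mul_apply, Fin.revPerm_apply, Fin.rev_lt_rev]
  have hSb : ∀ π : Equiv.Perm (Fin n), f π + f (Fin.revPerm * π) ≤ min (2 * α) T := by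
    intro π
    rw [hrev π]
    have hsum : (∑ j ∈ Finset.univ.filter (fun j => π j < π i), a j)
        + (∑ j ∈ Finset.univ.filter (fun j => π i < π j), a j) ≤ T := by
      rw [← Finset.sum_union (by
        rw [Finset.disjoint_filter]
        intro j _ hj
        exact lt_asymm hj)]
      exact Finset.sum_le_sum_of_subset_of_nonneg (Finset.subset_univ _) fun j _ _ => ha j
    have l1 := min_le_left α (∑ j ∈ Finset.univ.filter (fun j => π j < π i), a j)
    have l2 := min_le_left α (∑ j ∈ Finset.univ.filter (fun j => π i < π j), a j)
    have r1 := min_le_right α (∑ j ∈ Finset.univ.filter (fun j => π j < π i), a j)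
    have r2 := min_le_right α (∑ j ∈ Finset.univ.filter (fun j => π i < π j), a j)
    simp only [hf]
    exact le_min (by linarith) (by linarith)
  -- summing the pairwise bound
  have hdouble : 2 * ∑ π : Equiv.Perm (Fin n), f π
      ≤ (Fintype.card (Equiv.Perm (Fin n)) : ℝ) * min (2 * α) T := by
    have hre : ∑ π : Equiv.Perm (Fin n), f π
        = ∑ π : Equiv.Perm (Fin n), f (Fin.revPerm * π) :=
      (Equiv.sum_comp (Equiv.mulLeft (Fin.revPerm : Equiv.Perm (Fin n))) f).symm
    calc 2 * ∑ π : Equiv.Perm (Fin n), f π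
        = ∑ π : Equiv.Perm (Fin n), (f π + f (Fin.revPerm * π)) := by
          rw [Finset.sum_add_distrib, ← hre]; ring
      _ ≤ ∑ _π : Equiv.Perm (Fin n), min (2 * α) T :=
          Finset.sum_le_sum fun π _ => hSb π
      _ = (Fintype.card (Equiv.Perm (Fin n)) : ℝ) * min (2 * α) T := by
          rw [Finset.sum_const, nsmul_eq_mul]; rfl
  -- final arithmetic
  have hrhs : ∑ _π : Equiv.Perm (Fin n), min 1 T
      = (Fintype.card (Equiv.Perm (Fin n)) : ℝ) * min 1 T := by
    rw [Finset.sum_const, nsmul_eq_mul]; rfl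
  rw [hrhs]
  have hcard : (0 : ℝ) ≤ (Fintype.card (Equiv.Perm (Fin n)) : ℝ) := Nat.cast_nonneg _
  have harith : min (2 * α) T ≤ 2 * (max α (1 / 2) * min 1 T) := by
    rcases le_or_gt T 1 with h | h
    · have : min 1 T = T := min_eq_right h
      rw [this]
      have h1 : min (2 * α) T ≤ T := min_le_right _ _
      have h2 : (1 : ℝ) / 2 ≤ max α (1 / 2) := le_max_right _ _
      nlinarith
    · have : min 1 T = 1 := min_eq_left (le_of_lt h)
      rw [this]
      have h1 : min (2 * α) T ≤ 2 * α := min_le_left _ _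
      have h2 : α ≤ max α (1 / 2) := le_max_left _ _
      nlinarith
  have := mul_le_mul_of_nonneg_left harith hcard
  nlinarith [hdouble]

/-- For any agent i, price p > 0 and α > 0, with the ordering π drawn uniformly at
random (expectation over π written as the average over all n! permutations),
E_{ω,π}[min{α, Σ_{j≺_π i} y*_j(ω)}] ≤ max{α, 1/2} · E_{ω,π}[Σ_j y_j(ω,π)]. -/
theorem stmt_3
    {n : ℕ} {Ω : Fin n → Type*} [∀ j, MeasurableSpace (Ω j)]
    (μ : ∀ j, Measure (Ω j)) [∀ j, IsProbabilityMeasure (μ j)]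
    (v : ∀ j, Ω j → ℝ → ℝ) (ystar : ∀ j, Ω j → ℝ) (p : ℝ) (hp : 0 < p)
    (hval : ∀ j, ∀ᵐ ωj ∂ μ j, (∀ z ∈ Set.Icc (0:ℝ) 1, 0 ≤ v j ωj z) ∧
        MonotoneOn (v j ωj) (Set.Icc (0:ℝ) 1) ∧ ConcaveOn ℝ (Set.Icc (0:ℝ) 1) (v j ωj))
    (hystar_meas : ∀ j, Measurable (ystar j))
    (hystar : ∀ j, ∀ᵐ ωj ∂ μ j, ystar j ωj ∈ Set.Icc (0:ℝ) 1 ∧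
        ∀ z ∈ Set.Icc (0:ℝ) 1, v j ωj z - p * z ≤ v j ωj (ystar j ωj) - p * ystar j ωj)
    (i : Fin n) (α : ℝ) (hα : 0 < α)
    (S y : Equiv.Perm (Fin n) → Fin n → (∀ j, Ω j) → ℝ)
    (hS : ∀ π k ω, S π k ω = ∑ j ∈ Finset.univ.filter (fun j => π j < π k), ystar j (ω j))
    (hy : ∀ π k ω, y π k ω = min (ystar k (ω k)) (max 0 (1 - S π k ω)))
    -- integrability of the displayed random variables
    (hint_min : ∀ π : Equiv.Perm (Fin n),
      Integrable (fun ω => min α (S π i ω)) (Measure.pi μ))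
    (hint_y : ∀ (π : Equiv.Perm (Fin n)) (k : Fin n), Integrable (y π k) (Measure.pi μ)) :
    (Nat.factorial n : ℝ)⁻¹ *
        ∑ π : Equiv.Perm (Fin n), ∫ ω, min α (S π i ω) ∂(Measure.pi μ) ≤
      max α (1 / 2) *
        ((Nat.factorial n : ℝ)⁻¹ *
          ∑ π : Equiv.Perm (Fin n), ∫ ω, (∑ j, y π j ω) ∂(Measure.pi μ)) := by
  classical
  -- a.e. nonnegativity of ystar in the product space
  have hae : ∀ᵐ ω ∂ (Measure.pi μ), ∀ j, 0 ≤ ystar j (ω j) := by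
    rw [MeasureTheory.ae_all_iff]
    intro j
    have h1 : ∀ᵐ ωj ∂ μ j, 0 ≤ ystar j ωj := (hystar j).mono fun x hx => hx.1.1
    exact Measure.tendsto_eval_ae_ae.eventually h1
  -- pointwise (in ω, a.e.) inequality of the π-sums
  have hptwise : ∀ᵐ ω ∂ (Measure.pi μ),
      (∑ π : Equiv.Perm (Fin n), min α (S π i ω))
        ≤ max α (1 / 2) * ∑ π : Equiv.Perm (Fin n), ∑ j, y π j ω := by
    filter_upwards [hae] with ω h0
    have hA : ∀ π : Equiv.Perm (Fin n), ∑ j, y π j ω = min 1 (∑ j, ystar j (ω j)) := by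
      intro π
      have := seq_alloc_sum (fun j => ystar j (ω j)) h0 π
      rw [← this]
      apply Finset.sum_congr rfl
      intro j _
      rw [hy, hS]
    have hB := perm_pair_bound (fun j => ystar j (ω j)) h0 i α hα
    calc ∑ π : Equiv.Perm (Fin n), min α (S π i ω)
        = ∑ π : Equiv.Perm (Fin n),
            min α (∑ j ∈ Finset.univ.filter (fun j => π j < π i), ystar j (ω j)) := by
          apply Finset.sum_congr rfl; intro π _; rw [hS]
      _ ≤ max α (1 / 2) * ∑ π : Equiv.Perm (Fin n), min 1 (∑ j, ystar j (ω j)) := hB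
      _ = max α (1 / 2) * ∑ π : Equiv.Perm (Fin n), ∑ j, y π j ω := by
          congr 1
          exact Finset.sum_congr rfl fun π _ => (hA π).symm
  -- integrability of the aggregated functions
  have hintL : Integrable (fun ω => ∑ π : Equiv.Perm (Fin n), min α (S π i ω)) (Measure.pi μ) :=
    integrable_finset_sum _ fun π _ => hint_min π
  have hint_sumy : ∀ π : Equiv.Perm (Fin n),
      Integrable (fun ω => ∑ j, y π j ω) (Measure.pi μ) :=
    fun π => integrable_finset_sum _ fun j _ => hint_y π j
  have hintR : Integrable (fun ω => ∑ π : Equiv.Perm (Fin n), ∑ j, y π j ω) (Measure.pi μ) :=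
    integrable_finset_sum _ fun π _ => hint_sumy π
  -- exchange sum and integral
  have hL : ∑ π : Equiv.Perm (Fin n), ∫ ω, min α (S π i ω) ∂(Measure.pi μ)
      = ∫ ω, ∑ π : Equiv.Perm (Fin n), min α (S π i ω) ∂(Measure.pi μ) :=
    (integral_finset_sum _ fun π _ => hint_min π).symm
  have hR : ∑ π : Equiv.Perm (Fin n), ∫ ω, (∑ j, y π j ω) ∂(Measure.pi μ)
      = ∫ ω, ∑ π : Equiv.Perm (Fin n), ∑ j, y π j ω ∂(Measure.pi μ) :=
    (integral_finset_sum _ fun π _ => hint_sumy π).symm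
  -- main integral inequality
  have hIneq : ∫ ω, ∑ π : Equiv.Perm (Fin n), min α (S π i ω) ∂(Measure.pi μ)
      ≤ max α (1 / 2) * ∫ ω, ∑ π : Equiv.Perm (Fin n), ∑ j, y π j ω ∂(Measure.pi μ) := by
    rw [← integral_const_mul]
    exact integral_mono_ae hintL (hintR.const_mul _) hptwise
  rw [hL, hR]
  have hfac : (0 : ℝ) ≤ (Nat.factorial n : ℝ)⁻¹ := by positivity
  calc (Nat.factorial n : ℝ)⁻¹ * ∫ ω, ∑ π : Equiv.Perm (Fin n), min α (S π i ω) ∂(Measure.pi μ)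
      ≤ (Nat.factorial n : ℝ)⁻¹ *
        (max α (1 / 2) * ∫ ω, ∑ π : Equiv.Perm (Fin n), ∑ j, y π j ω ∂(Measure.pi μ)) :=
        mul_le_mul_of_nonneg_left hIneq hfac
    _ = max α (1 / 2) *
        ((Nat.factorial n : ℝ)⁻¹ *
          ∫ ω, ∑ π : Equiv.Perm (Fin n), ∑ j, y π j ω ∂(Measure.pi μ)) := by ring
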